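/- Let d ≥ 2 and let ‖·‖ be a continuous quasi-norm on ℝ^d that is monotone (for x, y in the same closed orthant with |x_j| ≤ |y_j| for all j one has ‖x‖ ≤ ‖y‖). Let x, y ∈ ℝ^d satisfy x_j ≥ 0 and y_j ≥ 0 for all j, x_d = y_d = 0, ‖x‖ ≤ 1 and ‖y‖ ≤ 1, and suppose σ, τ ∈ [0, 1] are the minimal shifts with ‖x + σ·𝟙‖ = 1 and ‖y + τ·𝟙‖ = 1. Then ‖(x + σ·𝟙) − (y + τ·𝟙)‖_∞ ≤ 2 ‖x − y‖_∞. -/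

import Mathlib

open scoped Pointwise BigOperators

/-- A quasi-norm on `ℝ^d`: nonnegative, definite, absolutely homogeneous, and satisfying the
quasi-triangle inequality `‖x + y‖ ≤ C(‖x‖ + ‖y‖)` for some `C ≥ 1`. -/
def IsQuasiNorm {d : ℕ} (f : (Fin d → ℝ) → ℝ) : Prop :=
  (∀ x, 0 ≤ f x) ∧ (∀ x, f x = 0 ↔ x = 0) ∧
  (∀ (l : ℝ) (x), f (l • x) = |l| * f x) ∧
  (∃ C : ℝ, 1 ≤ C ∧ ∀ x y, f (x + y) ≤ C * (f x + f y))

/-- The `ℓ_∞` norm on `ℝ^d`. -/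
noncomputable def supNorm {d : ℕ} (x : Fin d → ℝ) : ℝ :=
  ⨆ i, |x i|

/-- The closed unit ball of `ℓ_∞^d`. -/
def supBall (d : ℕ) : Set (Fin d → ℝ) := {x | supNorm x ≤ 1}

/-- The orthogonal projection of `ℝ^d` onto the hyperplane `{x : x_i = 0}`,
setting the `i`-th coordinate to zero. -/
def proj {d : ℕ} (i : Fin d) (x : Fin d → ℝ) : Fin d → ℝ :=
  Function.update x i 0

/-- The `k`-th (dyadic) entropy number of `K` with respect to the "unit ball" `B`:
the infimum of all `ε > 0` such that `K` can be covered by `2^(k-1)` translates of `ε • B`. -/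
noncomputable def entropyNumber {d : ℕ} (K B : Set (Fin d → ℝ)) (k : ℕ) : ℝ :=
  sInf {ε : ℝ | 0 < ε ∧ ∃ c : Fin (2 ^ (k - 1)) → (Fin d → ℝ),
    K ⊆ ⋃ j, (c j +ᵥ ε • B)}

/-- Monotonicity of a quasi-norm: for `x, y` lying in the same closed orthant
(equivalently `x_j y_j ≥ 0` for all `j`) with `|x_j| ≤ |y_j|` for all `j`, `‖x‖ ≤ ‖y‖`. -/
def IsMonotoneQuasiNorm {d : ℕ} (f : (Fin d → ℝ) → ℝ) : Prop :=
  ∀ x y : Fin d → ℝ, (∀ j, 0 ≤ x j * y j) → (∀ j, |x j| ≤ |y j|) → f x ≤ f y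

lemma shift_key {d : ℕ} [Nonempty (Fin d)]
    (n : (Fin d → ℝ) → ℝ) (hnc : Continuous n)
    (hmono : ∀ a b : Fin d → ℝ, (∀ j, 0 ≤ a j * b j) → (∀ j, |a j| ≤ |b j|) → n a ≤ n b)
    (x y : Fin d → ℝ) (hx : ∀ j, 0 ≤ x j) (hy : ∀ j, 0 ≤ y j)
    (hx1 : n x ≤ 1)
    (σ τ : ℝ) (hτ0 : 0 ≤ τ)
    (hσmin : ∀ t : ℝ, 0 ≤ t → n (x + t • (1 : Fin d → ℝ)) = 1 → σ ≤ t)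
    (hτ1 : n (y + τ • (1 : Fin d → ℝ)) = 1) :
    σ ≤ τ + supNorm (x - y) := by
  set δ := supNorm (x - y) with hδ
  have hbd : ∀ j, |x j - y j| ≤ δ := fun j => by
    have := le_ciSup (f := fun i => |(x - y) i|) (Set.Finite.bddAbove (Set.finite_range _)) j
    simpa [hδ, supNorm] using this
  have hδ0 : 0 ≤ δ := le_trans (abs_nonneg _) (hbd (Classical.arbitrary _))
  have h1 : (1 : ℝ) ≤ n (x + (τ + δ) • (1 : Fin d → ℝ)) := by
    rw [← hτ1]
    apply hmono
    · intro j
      have : (0:ℝ) ≤ y j + τ := by have := hy j; linarith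
      have h2 : (0:ℝ) ≤ x j + (τ + δ) := by
        have := hx j; linarith
      simp only [Pi.add_apply, Pi.smul_apply, Pi.one_apply, smul_eq_mul, mul_one]
      exact mul_nonneg this h2
    · intro j
      have h3 : y j - x j ≤ δ := by
        have := hbd j; rw [abs_sub_comm] at this
        exact le_trans (le_abs_self _) this
      have : (0:ℝ) ≤ y j + τ := by have := hy j; linarith
      have h2 : (0:ℝ) ≤ x j + (τ + δ) := by have := hx j; linarith
      simp only [Pi.add_apply, Pi.smul_apply, Pi.one_apply, smul_eq_mul, mul_one]
      rw [abs_of_nonneg ‹(0:ℝ) ≤ y j + τ›, abs_of_nonneg h2]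
      linarith
  have hcont : ContinuousOn (fun t : ℝ => n (x + t • (1 : Fin d → ℝ)))
      (Set.Icc 0 (τ + δ)) := by
    apply Continuous.continuousOn
    exact hnc.comp (by continuity)
  have h0 : n (x + (0:ℝ) • (1 : Fin d → ℝ)) ≤ 1 := by simpa using hx1
  have := intermediate_value_Icc (by linarith : (0:ℝ) ≤ τ + δ) hcont
  have hmem : (1:ℝ) ∈ Set.Icc (n (x + (0:ℝ) • (1 : Fin d → ℝ)))
      (n (x + (τ + δ) • (1 : Fin d → ℝ))) := ⟨h0, h1⟩
  obtain ⟨t, ht, hteq⟩ := this hmem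
  exact le_trans (hσmin t ht.1 hteq) ht.2

/-- Let `‖·‖` be a continuous monotone quasi-norm on `ℝ^d` (`d ≥ 2`),
let `x, y` have nonnegative coordinates with `x_d = y_d = 0`, `‖x‖ ≤ 1`, `‖y‖ ≤ 1`, and let
`σ, τ ∈ [0,1]` be the minimal shifts with `‖x + σ·𝟙‖ = 1` and `‖y + τ·𝟙‖ = 1`. Then
`‖(x + σ·𝟙) − (y + τ·𝟙)‖_∞ ≤ 2‖x − y‖_∞`. -/
theorem shift_lipschitz_general (d : ℕ) (hd : 2 ≤ d)
    (n : (Fin d → ℝ) → ℝ) (hn : IsQuasiNorm n) (hnc : Continuous n)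
    (hmono : IsMonotoneQuasiNorm n)
    (x y : Fin d → ℝ) (hx : ∀ j, 0 ≤ x j) (hy : ∀ j, 0 ≤ y j)
    (hxd : x ⟨d - 1, by omega⟩ = 0) (hyd : y ⟨d - 1, by omega⟩ = 0)
    (hx1 : n x ≤ 1) (hy1 : n y ≤ 1)
    (σ τ : ℝ) (hσ : σ ∈ Set.Icc (0 : ℝ) 1) (hτ : τ ∈ Set.Icc (0 : ℝ) 1)
    (hσ1 : n (x + σ • (1 : Fin d → ℝ)) = 1)
    (hσmin : ∀ t : ℝ, 0 ≤ t → n (x + t • (1 : Fin d → ℝ)) = 1 → σ ≤ t)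
    (hτ1 : n (y + τ • (1 : Fin d → ℝ)) = 1)
    (hτmin : ∀ t : ℝ, 0 ≤ t → n (y + t • (1 : Fin d → ℝ)) = 1 → τ ≤ t) :
    supNorm ((x + σ • (1 : Fin d → ℝ)) - (y + τ • (1 : Fin d → ℝ))) ≤
      2 * supNorm (x - y) := by
  have : Nonempty (Fin d) := ⟨⟨0, by omega⟩⟩
  have hsymm : supNorm (y - x) = supNorm (x - y) := by
    unfold supNorm; congr 1; ext i; simp [abs_sub_comm]
  have hστ : σ ≤ τ + supNorm (x - y) :=
    shift_key n hnc hmono x y hx hy hx1 σ τ hτ.1 hσmin hτ1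
  have hτσ : τ ≤ σ + supNorm (x - y) := by
    have := shift_key n hnc hmono y x hy hx hy1 τ σ hσ.1 hτmin hσ1
    rwa [hsymm] at this
  set δ := supNorm (x - y) with hδ
  have hbd : ∀ j, |x j - y j| ≤ δ := fun j => by
    have := le_ciSup (f := fun i => |(x - y) i|) (Set.Finite.bddAbove (Set.finite_range _)) j
    simpa [hδ, supNorm] using this
  have hστabs : |σ - τ| ≤ δ := abs_sub_le_iff.2 ⟨by linarith, by linarith⟩
  apply ciSup_le
  intro j
  have h1 := hbd j
  have h2 : |(x j + σ) - (y j + τ)| ≤ |x j - y j| + |σ - τ| := by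
    have : (x j + σ) - (y j + τ) = (x j - y j) + (σ - τ) := by ring
    rw [this]; exact abs_add_le _ _
  simp only [Pi.sub_apply, Pi.add_apply, Pi.smul_apply, Pi.one_apply, smul_eq_mul, mul_one]
  calc |x j + σ - (y j + τ)| ≤ |x j - y j| + |σ - τ| := h2
    _ ≤ δ + δ := add_le_add h1 hστabs
    _ = 2 * δ := by ring
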